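/- If H ∈ ℝ₊^{r×n} satisfies SSC1 (i.e., C ⊆ cone(H)) with r ≥ 2, then every row of H has at least one zero entry. (Equivalently, no row of H can be strictly positive.) -/

import Mathlib

noncomputable def enorm' {r : ℕ} (x : Fin r → ℝ) : ℝ := Real.sqrt (∑ i, (x i) ^ 2)

def sscCone (r : ℕ) : Set (Fin r → ℝ) :=
  {x | Real.sqrt ((r : ℝ) - 1) * enorm' x ≤ ∑ i, x i}

def coneOf {r n : ℕ} (H : Matrix (Fin r) (Fin n) ℝ) : Set (Fin r → ℝ) :=
  {x | ∃ y : Fin n → ℝ, (∀ j, 0 ≤ y j) ∧ H.mulVec y = x}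

/-- If `H ≥ 0` satisfies SSC1 with `r ≥ 2`, then every row of `H`
has at least one zero entry. -/
theorem row_has_zero_of_ssc1 {r n : ℕ} (hr : 2 ≤ r) (H : Matrix (Fin r) (Fin n) ℝ)
    (hH : ∀ i j, 0 ≤ H i j) (hssc1 : sscCone r ⊆ coneOf H) :
    ∀ i : Fin r, ∃ j : Fin n, H i j = 0 := by
  intro i
  by_contra hc
  push_neg at hc
  have hpos : ∀ j, 0 < H i j := fun j => lt_of_le_of_ne (hH i j) (Ne.symm (hc j))
  set x : Fin r → ℝ := fun k => if k = i then 0 else 1 with hx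
  have hxform : ∀ k, x k = 1 - (if k = i then (1:ℝ) else 0) := by
    intro k; simp only [hx]; split <;> norm_num
  have hsum : ∑ k, x k = (r : ℝ) - 1 := by
    simp [hxform, Finset.sum_sub_distrib, Finset.sum_ite_eq']
  have hsq : ∀ k, (x k) ^ 2 = x k := by
    intro k; simp only [hx]; split <;> norm_num
  have hr1 : (0:ℝ) ≤ (r : ℝ) - 1 := by
    have : (2:ℝ) ≤ (r:ℝ) := by exact_mod_cast hr
    linarith
  have hmem : x ∈ sscCone r := by
    show Real.sqrt ((r : ℝ) - 1) * enorm' x ≤ ∑ k, x k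
    have henorm : enorm' x = Real.sqrt ((r:ℝ) - 1) := by
      unfold enorm'
      congr 1
      rw [Finset.sum_congr rfl (fun k _ => hsq k), hsum]
    rw [henorm, hsum, Real.mul_self_sqrt hr1]
  obtain ⟨y, hy0, hyH⟩ := hssc1 hmem
  have hrow : ∑ j, H i j * y j = 0 := by
    have := congrFun hyH i
    simpa [Matrix.mulVec, dotProduct, hx] using this
  have hyz : ∀ j, y j = 0 := by
    intro j
    have hterm : ∀ j ∈ Finset.univ, 0 ≤ H i j * y j :=
      fun j _ => mul_nonneg (hH i j) (hy0 j)
    have := (Finset.sum_eq_zero_iff_of_nonneg hterm).mp hrow j (Finset.mem_univ j)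
    exact (mul_eq_zero.mp this).resolve_left (ne_of_gt (hpos j)) 
  -- pick i' ≠ i
  obtain ⟨i', hi'⟩ : ∃ i' : Fin r, i' ≠ i := by
    have : 1 < Fintype.card (Fin r) := by simpa using lt_of_lt_of_le one_lt_two hr
    exact Fintype.exists_ne_of_one_lt_card this i
  have h1 : (H.mulVec y) i' = 1 := by
    rw [hyH]; simp [hx, hi']
  have h0 : (H.mulVec y) i' = 0 := by
    simp [Matrix.mulVec, dotProduct, hyz]
  rw [h1] at h0; norm_num at h0
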